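/- The asymptotic growth constant of the number of spanning trees of the (1,3)-flower F_n equals (1/6)(4·ln 2 + ln 3); that is, lim_{n→∞} ln τ(F_n) / |V(F_n)| = (1/6)(4·ln 2 + ln 3). -/

import Mathlib

open scoped Classical

noncomputable section

/-- A finite two-terminal graph: a finite simple graph together with two
distinct distinguished vertices `X` and `Y`. -/
structure TTG where
  V : Type
  [instFintypeV : Fintype V]
  G : SimpleGraph V
  X : V
  Y : V
  hXY : X ≠ Y

attribute [instance] TTG.instFintypeV

/-- `K_2`, with its two vertices as the terminals `X_0` and `Y_0`. -/
def TTG.base : TTG where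
  V := Fin 2
  G := ⊤
  X := 0
  Y := 1
  hXY := by decide

namespace TTG

/-- The embedding of the `i`-th copy of `H` (for `i : Fin 4`) into the vertex set of the
`(1,3)`-merge of four copies of `H`, in which `X` of copy `0` is identified with `X` of
copy `1` (the new terminal `X`), `Y` of copy `0` with `Y` of copy `3` (the new terminal
`Y`), `Y` of copy `1` with `X` of copy `2`, and `Y` of copy `2` with `X` of copy `3`. -/
def iota13 (H : TTG) (i : Fin 4) (a : H.V) :
    {v : H.V // v ≠ H.Y} ⊕ (Fin 3 × {v : H.V // v ≠ H.X}) :=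
  if i = 0 then
    if h : a = H.Y then Sum.inr (2, ⟨H.Y, Ne.symm H.hXY⟩) else Sum.inl ⟨a, h⟩
  else if i = 1 then
    if h : a = H.X then Sum.inl ⟨H.X, H.hXY⟩ else Sum.inr (0, ⟨a, h⟩)
  else if i = 2 then
    if h : a = H.X then Sum.inr (0, ⟨H.Y, Ne.symm H.hXY⟩) else Sum.inr (1, ⟨a, h⟩)
  else
    if h : a = H.X then Sum.inr (1, ⟨H.Y, Ne.symm H.hXY⟩) else Sum.inr (2, ⟨a, h⟩)

/-- The `(1,3)`-merge of four disjoint copies of `H`: `X` of copy `0` is identified with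
`X` of copy `1` (the new terminal `X`), `Y` of copy `0` with `Y` of copy `3` (the new
terminal `Y`), `Y` of copy `1` with `X` of copy `2`, and `Y` of copy `2` with `X` of
copy `3`; thus the two new terminals are joined by copy `0` directly and by the chain of
copies `1`, `2`, `3`. -/
def step13 (H : TTG) : TTG where
  V := {v : H.V // v ≠ H.Y} ⊕ (Fin 3 × {v : H.V // v ≠ H.X})
  G := SimpleGraph.fromRel (fun u w =>
        ∃ i a b, H.G.Adj a b ∧ u = H.iota13 i a ∧ w = H.iota13 i b)
  X := Sum.inl ⟨H.X, H.hXY⟩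
  Y := Sum.inr (2, ⟨H.Y, Ne.symm H.hXY⟩)
  hXY := by simp

end TTG

/-- The `(1,3)`-flower `F_n`: `F_0 = K_2`, and `F_{n+1}` is the `(1,3)`-merge of four
copies of `F_n`. -/
def flower13 : ℕ → TTG
  | 0 => TTG.base
  | n + 1 => TTG.step13 (flower13 n)

/-- The number `τ(G)` of spanning trees of `G`: the number of edge sets `A ⊆ E(G)` for
which the spanning subgraph `(V, A)` is connected and acyclic. -/
def spanningTreeCount {V : Type} [Fintype V] (G : SimpleGraph V) : ℕ :=
  Nat.card {A : Finset (Sym2 V) // A ⊆ G.edgeFinset ∧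
    (SimpleGraph.fromEdgeSet (A : Set (Sym2 V))).Connected ∧
    (SimpleGraph.fromEdgeSet (A : Set (Sym2 V))).IsAcyclic}


noncomputable section

namespace STAux

open SimpleGraph

variable {V : Type} [Fintype V]

omit [Fintype V] in
lemma reachable_delete {G : SimpleGraph V} {u v : V}
    (huv : (G \ fromEdgeSet {s(u, v)}).Reachable u v) {x y : V} (h : G.Reachable x y) :
    (G \ fromEdgeSet {s(u, v)}).Reachable x y := by
  obtain ⟨p⟩ := h
  induction p with
  | nil => exact Reachable.refl _
  | @cons a b c h p ih =>
    refine Reachable.trans ?_ ih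
    by_cases he : s(a, b) = s(u, v)
    · rcases Sym2.eq_iff.mp he with ⟨rfl, rfl⟩ | ⟨rfl, rfl⟩
      · exact huv
      · exact huv.symm
    · refine Adj.reachable ?_
      rw [sdiff_adj, fromEdgeSet_adj]
      exact ⟨h, fun hc => he hc.1⟩

omit [Fintype V] in
lemma connected_delete {G : SimpleGraph V} {u v : V} (hG : G.Connected)
    (huv : (G \ fromEdgeSet {s(u, v)}).Reachable u v) :
    (G \ fromEdgeSet {s(u, v)}).Connected := by
  have : Nonempty V := hG.nonempty
  exact ⟨fun x y => reachable_delete huv (hG x y)⟩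

omit [Fintype V] in
lemma edgeSet_delete {G : SimpleGraph V} {u v : V} (h : G.Adj u v) :
    (G \ fromEdgeSet {s(u, v)}).edgeSet = G.edgeSet \ {s(u, v)} := by
  rw [edgeSet_sdiff, edgeSet_fromEdgeSet]
  ext e
  simp only [Set.mem_diff, Set.mem_singleton_iff, Set.mem_setOf_eq]
  constructor
  · rintro ⟨he, hne⟩
    refine ⟨he, fun hh => hne ⟨hh, ?_⟩⟩
    subst hh; simpa using h.ne
  · rintro ⟨he, hne⟩
    exact ⟨he, fun hh => hne hh.1⟩

lemma ncard_edgeSet_eq {G : SimpleGraph V} [Fintype G.edgeSet] :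
    G.edgeSet.ncard = G.edgeFinset.card := Set.ncard_eq_toFinset_card' _

/-- A connected graph on `n` vertices has at least `n - 1` edges. -/
lemma card_le_of_connected' : ∀ (m : ℕ) (G : SimpleGraph V), G.edgeSet.ncard = m →
    G.Connected → Fintype.card V ≤ G.edgeSet.ncard + 1 := by
  intro m
  induction m using Nat.strong_induction_on with
  | _ m ih =>
    intro G hGm hG
    by_cases hac : G.IsAcyclic
    · have ht : G.IsTree := ⟨hG, hac⟩
      have := ht.card_edgeFinset
      rw [← ncard_edgeSet_eq] at this
      omega
    · rw [isAcyclic_iff_forall_adj_isBridge] at hac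
      push_neg at hac
      obtain ⟨u, v, huv, hnb⟩ := hac
      rw [isBridge_iff] at hnb
      push_neg at hnb
      have hr := hnb
      have hG' := connected_delete hG hr
      have hmem : s(u, v) ∈ G.edgeSet := huv
      have hcard : (G \ fromEdgeSet {s(u, v)}).edgeSet.ncard = m - 1 := by
        rw [edgeSet_delete huv, Set.ncard_diff_singleton_of_mem hmem, hGm]
      have hmpos : 0 < m := by
        rw [← hGm]
        exact (Set.ncard_pos G.edgeSet.toFinite).mpr ⟨s(u, v), hmem⟩
      have := ih (m - 1) (by omega) _ hcard hG'
      omega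

lemma card_le_of_connected {G : SimpleGraph V} (hG : G.Connected) :
    Fintype.card V ≤ G.edgeSet.ncard + 1 :=
  card_le_of_connected' _ G rfl hG

lemma isAcyclic_of_connected_card {G : SimpleGraph V} (hG : G.Connected)
    (hcard : G.edgeSet.ncard + 1 ≤ Fintype.card V) : G.IsAcyclic := by
  by_contra hac
  rw [isAcyclic_iff_forall_adj_isBridge] at hac
  push_neg at hac
  obtain ⟨u, v, huv, hnb⟩ := hac
  rw [isBridge_iff] at hnb
  push_neg at hnb
  have hG' := connected_delete hG hnb
  have h2 := card_le_of_connected hG'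
  have hmem : s(u, v) ∈ G.edgeSet := huv
  rw [edgeSet_delete huv, Set.ncard_diff_singleton_of_mem hmem] at h2
  have hmpos : 0 < G.edgeSet.ncard := (Set.ncard_pos G.edgeSet.toFinite).mpr ⟨s(u, v), hmem⟩
  omega

omit [Fintype V] in
lemma isAcyclic_anti {G G' : SimpleGraph V} (h : G ≤ G') (hG' : G'.IsAcyclic) :
    G.IsAcyclic := by
  intro v c hc
  exact hG' (c.mapLe h) (hc.mapLe h)

end STAux

namespace STAux
open SimpleGraph

variable {V : Type} [Fintype V]

/-- `A` is the edge set of a spanning tree of `G`. -/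
def IsSTree (G : SimpleGraph V) (A : Finset (Sym2 V)) : Prop :=
  A ⊆ G.edgeFinset ∧ (fromEdgeSet (A : Set (Sym2 V))).Connected ∧
    (fromEdgeSet (A : Set (Sym2 V))).IsAcyclic

/-- `A` is the edge set of a spanning two-component forest of `G` separating `X` and `Y`. -/
def IsSForest (G : SimpleGraph V) (X Y : V) (A : Finset (Sym2 V)) : Prop :=
  A ⊆ G.edgeFinset ∧ (fromEdgeSet (A : Set (Sym2 V))).IsAcyclic ∧
    ¬(fromEdgeSet (A : Set (Sym2 V))).Reachable X Y ∧
    ∀ v, (fromEdgeSet (A : Set (Sym2 V))).Reachable v X ∨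
      (fromEdgeSet (A : Set (Sym2 V))).Reachable v Y

lemma edgeSet_fromFinset {G : SimpleGraph V} {A : Finset (Sym2 V)} (hA : A ⊆ G.edgeFinset) :
    (fromEdgeSet (A : Set (Sym2 V))).edgeSet = (A : Set (Sym2 V)) := by
  rw [edgeSet_fromEdgeSet]
  ext e
  simp only [Set.mem_diff, Finset.mem_coe, Set.mem_setOf_eq, and_iff_left_iff_imp]
  intro he
  exact G.not_isDiag_of_mem_edgeSet (mem_edgeFinset.mp (hA he))

lemma IsSTree.card {G : SimpleGraph V} {A : Finset (Sym2 V)} (h : IsSTree G A) :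
    A.card + 1 = Fintype.card V := by
  obtain ⟨hA, hc, hac⟩ := h
  have ht : (fromEdgeSet (A : Set (Sym2 V))).IsTree := ⟨hc, hac⟩
  have := ht.card_edgeFinset
  rw [← ncard_edgeSet_eq, edgeSet_fromFinset hA, Set.ncard_coe_finset] at this
  exact this

lemma isSTree_of_card {G : SimpleGraph V} {A : Finset (Sym2 V)} (hA : A ⊆ G.edgeFinset)
    (hc : (fromEdgeSet (A : Set (Sym2 V))).Connected)
    (hcard : A.card + 1 = Fintype.card V) : IsSTree G A := by
  refine ⟨hA, hc, isAcyclic_of_connected_card hc ?_⟩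
  rw [edgeSet_fromFinset hA, Set.ncard_coe_finset]
  omega

section XY
variable {G : SimpleGraph V} {X Y : V} {A : Finset (Sym2 V)}

lemma connected_insertXY (hXY : X ≠ Y) (hA : A ⊆ G.edgeFinset)
    (hre : ∀ v, (fromEdgeSet (A : Set (Sym2 V))).Reachable v X ∨
      (fromEdgeSet (A : Set (Sym2 V))).Reachable v Y) :
    (fromEdgeSet (insert s(X, Y) (A : Set (Sym2 V)))).Connected := by
  have hle : fromEdgeSet (A : Set (Sym2 V)) ≤ fromEdgeSet (insert s(X, Y) ↑A) :=
    fromEdgeSet_mono (Set.subset_insert _ _)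
  have hadj : (fromEdgeSet (insert s(X, Y) (A : Set (Sym2 V)))).Adj X Y := by
    rw [fromEdgeSet_adj]
    exact ⟨Set.mem_insert _ _, hXY⟩
  have hX : ∀ v, (fromEdgeSet (insert s(X, Y) (A : Set (Sym2 V)))).Reachable v X := by
    intro v
    rcases hre v with h | h
    · exact h.mono hle
    · exact (h.mono hle).trans hadj.symm.reachable
  have : Nonempty V := ⟨X⟩
  exact ⟨fun x y => (hX x).trans (hX y).symm⟩

lemma notmem_insertXY (hXY : X ≠ Y)
    (hnr : ¬(fromEdgeSet (A : Set (Sym2 V))).Reachable X Y) : s(X, Y) ∉ A := by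
  intro hmem
  exact hnr (Adj.reachable (by rw [fromEdgeSet_adj]; exact ⟨hmem, hXY⟩))

lemma edgeSet_insertXY (hXY : X ≠ Y) (hA : A ⊆ G.edgeFinset) :
    (fromEdgeSet (insert s(X, Y) (A : Set (Sym2 V)))).edgeSet
      = insert s(X, Y) (A : Set (Sym2 V)) := by
  rw [edgeSet_fromEdgeSet]
  ext e
  simp only [Set.mem_diff, Set.mem_insert_iff, Finset.mem_coe, Set.mem_setOf_eq,
    and_iff_left_iff_imp]
  rintro (rfl | he)
  · simpa using hXY
  · exact G.not_isDiag_of_mem_edgeSet (mem_edgeFinset.mp (hA he))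

lemma IsSForest.card (hXY : X ≠ Y) (h : IsSForest G X Y A) :
    A.card + 2 = Fintype.card V := by
  obtain ⟨hA, hac, hnr, hre⟩ := h
  have hconn := connected_insertXY hXY hA hre
  have hnm := notmem_insertXY hXY hnr
  -- the graph with the extra edge is acyclic
  have hbridge : (fromEdgeSet (insert s(X, Y) (A : Set (Sym2 V)))).IsBridge s(X, Y) := by
    rw [isBridge_iff]
    refine fun hr => hnr ?_
    refine hr.mono fun a b hab => ?_
    rw [deleteEdges, sdiff_adj, fromEdgeSet_adj, fromEdgeSet_adj] at hab
    obtain ⟨⟨hmem, hne⟩, hnot⟩ := hab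
    rw [fromEdgeSet_adj]
    rcases hmem with heq | hmem
    · exact absurd ⟨by simpa using heq, hne⟩ hnot
    · exact ⟨hmem, hne⟩
  have hac' : (fromEdgeSet (insert s(X, Y) (A : Set (Sym2 V)))).IsAcyclic := by
    intro v c hc
    by_cases hmem : s(X, Y) ∈ c.edges
    · rw [isBridge_iff_mem_and_forall_cycle_notMem] at hbridge
      exacts [hbridge c hc hmem, c.edges_subset_edgeSet hmem]
    · have hsub : ∀ e ∈ c.edges, e ∈ (fromEdgeSet (A : Set (Sym2 V))).edgeSet := by
        intro e he
        have := c.edges_subset_edgeSet he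
        rw [edgeSet_insertXY hXY hA] at this
        rw [edgeSet_fromFinset hA]
        rcases this with rfl | hmem'
        · exact absurd he hmem
        · exact hmem'
      exact hac (c.transfer _ hsub) (hc.transfer hsub)
  have ht : (fromEdgeSet (insert s(X, Y) (A : Set (Sym2 V)))).IsTree := ⟨hconn, hac'⟩
  have hcard := ht.card_edgeFinset
  rw [← ncard_edgeSet_eq, edgeSet_insertXY hXY hA,
    Set.ncard_insert_of_notMem (by simpa using hnm) (A : Set (Sym2 V)).toFinite,
    Set.ncard_coe_finset] at hcard
  omega

lemma isSForest_of_card (hXY : X ≠ Y) (hA : A ⊆ G.edgeFinset)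
    (hre : ∀ v, (fromEdgeSet (A : Set (Sym2 V))).Reachable v X ∨
      (fromEdgeSet (A : Set (Sym2 V))).Reachable v Y)
    (hnr : ¬(fromEdgeSet (A : Set (Sym2 V))).Reachable X Y)
    (hcard : A.card + 2 = Fintype.card V) : IsSForest G X Y A := by
  have hconn := connected_insertXY hXY hA hre
  have hnm := notmem_insertXY hXY hnr
  have hac' : (fromEdgeSet (insert s(X, Y) (A : Set (Sym2 V)))).IsAcyclic := by
    refine isAcyclic_of_connected_card hconn ?_
    rw [edgeSet_insertXY hXY hA,
      Set.ncard_insert_of_notMem (by simpa using hnm) (A : Set (Sym2 V)).toFinite,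
      Set.ncard_coe_finset]
    omega
  refine ⟨hA, isAcyclic_anti (fromEdgeSet_mono (Set.subset_insert _ _)) hac', hnr, hre⟩

end XY
end STAux

namespace STAux
open SimpleGraph

abbrev Wt (H : TTG) : Type := {v : H.V // v ≠ H.Y} ⊕ (Fin 3 × {v : H.V // v ≠ H.X})

def s4 : Fin 4 → Fin 4 := ![0, 0, 1, 2]
def e4 : Fin 4 → Fin 4 := ![3, 1, 2, 3]

def term (H : TTG) : Fin 4 → Wt H :=
  ![Sum.inl ⟨H.X, H.hXY⟩, Sum.inr (0, ⟨H.Y, Ne.symm H.hXY⟩),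
    Sum.inr (1, ⟨H.Y, Ne.symm H.hXY⟩), Sum.inr (2, ⟨H.Y, Ne.symm H.hXY⟩)]

variable {H : TTG}

lemma iota0 (a : H.V) : H.iota13 0 a =
    if h : a = H.Y then Sum.inr (2, ⟨H.Y, Ne.symm H.hXY⟩) else Sum.inl ⟨a, h⟩ := rfl
lemma iota1 (a : H.V) : H.iota13 1 a =
    if h : a = H.X then Sum.inl ⟨H.X, H.hXY⟩ else Sum.inr (0, ⟨a, h⟩) := rfl
lemma iota2 (a : H.V) : H.iota13 2 a =
    if h : a = H.X then Sum.inr (0, ⟨H.Y, Ne.symm H.hXY⟩) else Sum.inr (1, ⟨a, h⟩) := rfl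
lemma iota3 (a : H.V) : H.iota13 3 a =
    if h : a = H.X then Sum.inr (1, ⟨H.Y, Ne.symm H.hXY⟩) else Sum.inr (2, ⟨a, h⟩) := rfl

lemma term0 : term H 0 = Sum.inl ⟨H.X, H.hXY⟩ := rfl
lemma term1 : term H 1 = Sum.inr (0, ⟨H.Y, Ne.symm H.hXY⟩) := rfl
lemma term2 : term H 2 = Sum.inr (1, ⟨H.Y, Ne.symm H.hXY⟩) := rfl
lemma term3 : term H 3 = Sum.inr (2, ⟨H.Y, Ne.symm H.hXY⟩) := rfl

lemma term_injective : Function.Injective (term H) := by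
  intro p q h
  fin_cases p <;> fin_cases q <;>
    simp_all only [Fin.reduceFinMk] <;>
    simp_all [term0, term1, term2, term3, H.hXY]

lemma iota_injective (i : Fin 4) : Function.Injective (H.iota13 i) := by
  intro a b h
  fin_cases i <;>
    simp only [Fin.reduceFinMk] at h <;>
    simp only [iota0, iota1, iota2, iota3] at h <;>
    split_ifs at h <;> simp_all

lemma iota_X (i : Fin 4) : H.iota13 i H.X = term H (s4 i) := by
  fin_cases i <;> simp only [Fin.reduceFinMk] <;>
    simp [iota0, iota1, iota2, iota3, s4, term0, term1, term2, term3, H.hXY]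

lemma iota_Y (i : Fin 4) : H.iota13 i H.Y = term H (e4 i) := by
  fin_cases i <;> simp only [Fin.reduceFinMk] <;>
    simp [iota0, iota1, iota2, iota3, e4, term0, term1, term2, term3, H.hXY, (H.hXY).symm]

lemma iota_eq_term {i p : Fin 4} {a : H.V} :
    H.iota13 i a = term H p ↔ (a = H.X ∧ p = s4 i) ∨ (a = H.Y ∧ p = e4 i) := by
  constructor
  · intro h
    fin_cases i <;>
      simp only [Fin.reduceFinMk] at h ⊢ <;>
      simp only [iota0, iota1, iota2, iota3] at h <;>
      split_ifs at h with hc <;>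
      fin_cases p <;>
      simp_all only [Fin.reduceFinMk, term0, term1, term2, term3, Sum.inl.injEq,
        Sum.inr.injEq, Prod.mk.injEq, Subtype.mk.injEq, reduceCtorEq, s4, e4] <;>
      simp_all (config := {decide := true}) [Matrix.cons_val_zero, Matrix.cons_val_one]
  · rintro (⟨rfl, rfl⟩ | ⟨rfl, rfl⟩)
    · exact iota_X i
    · exact iota_Y i

lemma iota_cross_mem {i j : Fin 4} {a b : H.V} (hij : i ≠ j)
    (h : H.iota13 i a = H.iota13 j b) : a = H.X ∨ a = H.Y := by
  fin_cases i <;> fin_cases j <;> try exact absurd rfl hij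
  all_goals (
    simp only [Fin.reduceFinMk] at h
    simp only [iota0, iota1, iota2, iota3] at h
    split_ifs at h <;> simp_all (config := {decide := true}))

lemma iota_cross {i j : Fin 4} {a b : H.V} (hij : i ≠ j) (h : H.iota13 i a = H.iota13 j b) :
    ∃ p, (a = H.X ∧ p = s4 i ∨ a = H.Y ∧ p = e4 i) ∧
      (b = H.X ∧ p = s4 j ∨ b = H.Y ∧ p = e4 j) := by
  rcases iota_cross_mem hij h with rfl | rfl
  · exact ⟨s4 i, Or.inl ⟨rfl, rfl⟩, iota_eq_term.mp (((iota_X i) ▸ h).symm)⟩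
  · exact ⟨e4 i, Or.inr ⟨rfl, rfl⟩, iota_eq_term.mp (((iota_Y i) ▸ h).symm)⟩

end STAux

namespace STAux
open SimpleGraph

variable {H : TTG}

lemma s4e4_disj : ∀ i j p q : Fin 4, i ≠ j → p ≠ q →
    (p = s4 i ∨ p = e4 i) → (q = s4 i ∨ q = e4 i) →
    (p = s4 j ∨ p = e4 j) → (q = s4 j ∨ q = e4 j) → False := by decide

lemma iota_term_of {i p : Fin 4} {a : H.V}
    (h : a = H.X ∧ p = s4 i ∨ a = H.Y ∧ p = e4 i) : H.iota13 i a = term H p := by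
  rcases h with ⟨rfl, rfl⟩ | ⟨rfl, rfl⟩
  · exact iota_X i
  · exact iota_Y i

lemma map_ne_map {i j : Fin 4} (hij : i ≠ j) {e e' : Sym2 H.V} (he : ¬e.IsDiag)
    (h : Sym2.map (H.iota13 i) e = Sym2.map (H.iota13 j) e') : False := by
  induction e using Sym2.ind with | _ a b =>
  induction e' using Sym2.ind with | _ c d =>
  have hab : a ≠ b := by simpa using he
  simp only [Sym2.map_pair_eq, Sym2.eq_iff] at h
  have key : ∀ x y : H.V, H.iota13 i a = H.iota13 j x → H.iota13 i b = H.iota13 j y → False := by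
    intro x y h1 h2
    obtain ⟨p, hp1, hp2⟩ := iota_cross hij h1
    obtain ⟨q, hq1, hq2⟩ := iota_cross hij h2
    have hpq : p ≠ q := by
      intro hh
      subst hh
      exact hab (iota_injective i ((iota_term_of hp1).trans (iota_term_of hq1).symm))
    exact s4e4_disj i j p q hij hpq
      (hp1.imp (fun h => h.2) (fun h => h.2)) (hq1.imp (fun h => h.2) (fun h => h.2))
      (hp2.imp (fun h => h.2) (fun h => h.2)) (hq2.imp (fun h => h.2) (fun h => h.2))
  rcases h with ⟨h1, h2⟩ | ⟨h1, h2⟩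
  · exact key c d h1 h2
  · exact key d c h1 h2

/-- Combine four edge sets, one per copy, into an edge set of the merge. -/
def phi (H : TTG) (B : Fin 4 → Finset (Sym2 H.V)) : Finset (Sym2 (Wt H)) :=
  Finset.univ.biUnion fun i => (B i).image (Sym2.map (H.iota13 i))

lemma mem_phi {B : Fin 4 → Finset (Sym2 H.V)} {e : Sym2 (Wt H)} :
    e ∈ phi H B ↔ ∃ i, ∃ e' ∈ B i, Sym2.map (H.iota13 i) e' = e := by
  simp [phi]

lemma phi_card {B : Fin 4 → Finset (Sym2 H.V)} (hB : ∀ i, B i ⊆ H.G.edgeFinset) :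
    (phi H B).card = ∑ i, (B i).card := by
  rw [phi, Finset.card_biUnion]
  · refine Finset.sum_congr rfl fun i _ => ?_
    exact Finset.card_image_of_injective _ (Sym2.map.injective (iota_injective i))
  · intro i _ j _ hij
    rw [Function.onFun, Finset.disjoint_left]
    intro e hei hej
    obtain ⟨e1, he1, rfl⟩ := Finset.mem_image.mp hei
    obtain ⟨e2, he2, heq⟩ := Finset.mem_image.mp hej
    exact map_ne_map hij
      (H.G.not_isDiag_of_mem_edgeSet (mem_edgeFinset.mp (hB i he1))) heq.symm

lemma step_adj {u w : Wt H} : (TTG.step13 H).G.Adj u w ↔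
    ∃ i a b, H.G.Adj a b ∧ u = H.iota13 i a ∧ w = H.iota13 i b := by
  show (SimpleGraph.fromRel _).Adj u w ↔ _
  rw [fromRel_adj]
  constructor
  · rintro ⟨hne, (⟨i, a, b, hab, h1, h2⟩ | ⟨i, a, b, hab, h1, h2⟩)⟩
    · exact ⟨i, a, b, hab, h1, h2⟩
    · exact ⟨i, b, a, hab.symm, h2, h1⟩
  · rintro ⟨i, a, b, hab, rfl, rfl⟩
    exact ⟨fun hh => hab.ne (iota_injective i hh), Or.inl ⟨i, a, b, hab, rfl, rfl⟩⟩

lemma mem_edgeSet_step {e : Sym2 (Wt H)} : e ∈ (TTG.step13 H).G.edgeSet ↔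
    ∃ i, ∃ e' ∈ H.G.edgeFinset, Sym2.map (H.iota13 i) e' = e := by
  induction e using Sym2.ind with | _ u w =>
  rw [show s(u, w) ∈ (TTG.step13 H).G.edgeSet ↔ (TTG.step13 H).G.Adj u w from mem_edgeSet _, step_adj]
  constructor
  · rintro ⟨i, a, b, hab, rfl, rfl⟩
    exact ⟨i, s(a, b), mem_edgeFinset.mpr hab, by simp⟩
  · rintro ⟨i, e', he', heq⟩
    induction e' using Sym2.ind with | _ a b =>
    simp only [Sym2.map_pair_eq, Sym2.eq_iff] at heq
    have hab : H.G.Adj a b := mem_edgeFinset.mp he'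
    rcases heq with ⟨h1, h2⟩ | ⟨h1, h2⟩
    · exact ⟨i, a, b, hab, h1.symm, h2.symm⟩
    · exact ⟨i, b, a, hab.symm, h2.symm, h1.symm⟩

lemma phi_subset_edgeFinset {B : Fin 4 → Finset (Sym2 H.V)}
    (hB : ∀ i, B i ⊆ H.G.edgeFinset) : phi H B ⊆ (TTG.step13 H).G.edgeFinset := by
  intro e he
  obtain ⟨i, e', he', rfl⟩ := mem_phi.mp he
  exact mem_edgeFinset.mpr (mem_edgeSet_step.mpr ⟨i, e', hB i he', rfl⟩)

/-- Split an edge set of the merge into four pieces. -/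
def psi (H : TTG) (A : Finset (Sym2 (Wt H))) : Fin 4 → Finset (Sym2 H.V) := fun i =>
  H.G.edgeFinset.filter fun e => Sym2.map (H.iota13 i) e ∈ A

lemma psi_subset {A : Finset (Sym2 (Wt H))} (i : Fin 4) : psi H A i ⊆ H.G.edgeFinset :=
  Finset.filter_subset _ _

lemma psi_phi {B : Fin 4 → Finset (Sym2 H.V)} (hB : ∀ i, B i ⊆ H.G.edgeFinset) :
    psi H (phi H B) = B := by
  funext i
  ext e
  simp only [psi, Finset.mem_filter, mem_phi]
  constructor
  · rintro ⟨he, j, e', he', heq⟩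
    by_cases hij : j = i
    · subst hij
      rwa [← Sym2.map.injective (iota_injective j) heq]
    · exact absurd heq.symm fun hh => map_ne_map (Ne.symm hij)
        (H.G.not_isDiag_of_mem_edgeSet (mem_edgeFinset.mp he)) hh
  · intro he
    exact ⟨hB i he, i, e, he, rfl⟩

lemma phi_psi {A : Finset (Sym2 (Wt H))} (hA : A ⊆ (TTG.step13 H).G.edgeFinset) :
    phi H (psi H A) = A := by
  ext e
  simp only [mem_phi, psi, Finset.mem_filter]
  constructor
  · rintro ⟨i, e', ⟨-, hmem⟩, rfl⟩
    exact hmem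
  · intro he
    obtain ⟨i, e', he', heq⟩ := mem_edgeSet_step.mp (mem_edgeFinset.mp (hA he))
    exact ⟨i, e', ⟨he', by rwa [heq]⟩, heq⟩

lemma K_adj {B : Fin 4 → Finset (Sym2 H.V)} {u w : Wt H} :
    (fromEdgeSet (↑(phi H B) : Set (Sym2 (Wt H)))).Adj u w ↔
      ∃ i a b, (fromEdgeSet (↑(B i) : Set (Sym2 H.V))).Adj a b ∧
        u = H.iota13 i a ∧ w = H.iota13 i b := by
  rw [fromEdgeSet_adj]
  constructor
  · rintro ⟨hmem, hne⟩
    obtain ⟨i, e', he', heq⟩ := mem_phi.mp hmem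
    induction e' using Sym2.ind with | _ a b =>
    simp only [Sym2.map_pair_eq, Sym2.eq_iff] at heq
    rcases heq with ⟨h1, h2⟩ | ⟨h1, h2⟩
    · refine ⟨i, a, b, ?_, h1.symm, h2.symm⟩
      rw [fromEdgeSet_adj]
      exact ⟨he', fun hh => hne (by rw [← h1, ← h2, hh])⟩
    · refine ⟨i, b, a, ?_, h2.symm, h1.symm⟩
      rw [fromEdgeSet_adj]
      exact ⟨by rwa [Sym2.eq_swap], fun hh => hne (by rw [← h1, ← h2, hh])⟩
  · rintro ⟨i, a, b, hab, rfl, rfl⟩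
    rw [fromEdgeSet_adj] at hab
    constructor
    · exact Finset.mem_coe.mpr (mem_phi.mpr ⟨i, s(a, b), hab.1, by simp⟩)
    · exact fun hh => hab.2 (iota_injective i hh)

lemma reach_map {B : Fin 4 → Finset (Sym2 H.V)} {i : Fin 4} {a b : H.V}
    (h : (fromEdgeSet (↑(B i) : Set (Sym2 H.V))).Reachable a b) :
    (fromEdgeSet (↑(phi H B) : Set (Sym2 (Wt H)))).Reachable
      (H.iota13 i a) (H.iota13 i b) := by
  obtain ⟨p⟩ := h
  induction p with
  | nil => exact Reachable.refl _
  | @cons x y z hxy p ih =>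
    exact (Adj.reachable (K_adj.mpr ⟨i, x, y, hxy, rfl, rfl⟩)).trans ih

lemma mem_closure {α : Type} {Γ : SimpleGraph α} {U : Set α}
    (hU : ∀ u w, u ∈ U → Γ.Adj u w → w ∈ U) {u w : α}
    (h : Γ.Reachable u w) (hu : u ∈ U) : w ∈ U := by
  obtain ⟨p⟩ := h
  induction p with
  | nil => exact hu
  | @cons x y z hxy p ih => exact ih (hU x y hu hxy)

lemma iota_surj (w : Wt H) : ∃ i a, w = H.iota13 i a := by
  rcases w with ⟨a, ha⟩ | ⟨j, b, hb⟩
  · exact ⟨0, a, by simp [iota0, ha]⟩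
  · fin_cases j
    · exact ⟨1, b, by simp [iota1, hb]⟩
    · exact ⟨2, b, by simp [iota2, hb]⟩
    · exact ⟨3, b, by simp [iota3, hb]⟩

end STAux

namespace STAux
open SimpleGraph

variable {H : TTG}

@[simp] lemma s4_0 : s4 0 = 0 := rfl
@[simp] lemma s4_1 : s4 1 = 0 := rfl
@[simp] lemma s4_2 : s4 2 = 1 := rfl
@[simp] lemma s4_3 : s4 3 = 2 := rfl
@[simp] lemma e4_0 : e4 0 = 3 := rfl
@[simp] lemma e4_1 : e4 1 = 1 := rfl
@[simp] lemma e4_2 : e4 2 = 2 := rfl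
@[simp] lemma e4_3 : e4 3 = 3 := rfl

/-- The four pieces, as graphs. -/
abbrev Gb (B : Fin 4 → Finset (Sym2 H.V)) (i : Fin 4) : SimpleGraph H.V :=
  fromEdgeSet (↑(B i) : Set (Sym2 H.V))

/-- The merged graph. -/
abbrev Kg (B : Fin 4 → Finset (Sym2 H.V)) : SimpleGraph (Wt H) :=
  fromEdgeSet (↑(phi H B) : Set (Sym2 (Wt H)))

/-- copy `i` joins every vertex to a terminal -/
def reachT (B : Fin 4 → Finset (Sym2 H.V)) (i : Fin 4) : Prop :=
  ∀ a, (Gb B i).Reachable a H.X ∨ (Gb B i).Reachable a H.Y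

/-- copy `i` joins its two terminals -/
def connT (B : Fin 4 → Finset (Sym2 H.V)) (i : Fin 4) : Prop :=
  (Gb B i).Reachable H.X H.Y

variable {B : Fin 4 → Finset (Sym2 H.V)}

lemma conn_reach_term {k : Fin 4} (hc : connT B k) :
    (Kg B).Reachable (term H (s4 k)) (term H (e4 k)) := by
  have := reach_map (B := B) (i := k) hc
  rwa [iota_X, iota_Y] at this

lemma not_reach_term {i : Fin 4} {a₀ : H.V} (hx : ¬(Gb B i).Reachable a₀ H.X)
    (hy : ¬(Gb B i).Reachable a₀ H.Y) (p : Fin 4) :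
    ¬(Kg B).Reachable (H.iota13 i a₀) (term H p) := by
  intro hr
  set U : Set (Wt H) := {w | ∃ c, (Gb B i).Reachable a₀ c ∧ w = H.iota13 i c} with hUdef
  have hclosed : ∀ u w, u ∈ U → (Kg B).Adj u w → w ∈ U := by
    rintro u w ⟨c, hc, rfl⟩ hadj
    obtain ⟨m, x, y, hxy, hux, rfl⟩ := K_adj.mp hadj
    by_cases him : m = i
    · subst him
      have hxc : c = x := iota_injective m hux
      exact ⟨y, hc.trans (hxc ▸ hxy.reachable), rfl⟩
    · rcases iota_cross_mem (fun hh => him (hh.symm)) hux with rfl | rfl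
      · exact absurd hc hx
      · exact absurd hc hy
  have hmem : term H p ∈ U := mem_closure hclosed hr ⟨a₀, Reachable.refl _, rfl⟩
  obtain ⟨c, hc, hterm⟩ := hmem
  rcases iota_eq_term.mp hterm.symm with ⟨rfl, -⟩ | ⟨rfl, -⟩
  · exact hx hc
  · exact hy hc

lemma term_mem_U {σ : Fin 4 → Bool} {r : Fin 4} (hr : σ r = true) :
    term H r ∈ {w : Wt H | ∃ k c, w = H.iota13 k c ∧
      (((Gb B k).Reachable c H.X ∧ σ (s4 k) = true) ∨
       ((Gb B k).Reachable c H.Y ∧ σ (e4 k) = true))} := by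
  fin_cases r
  · exact ⟨0, H.X, by rw [iota_X]; rfl, Or.inl ⟨Reachable.refl _, hr⟩⟩
  · exact ⟨2, H.X, by rw [iota_X]; rfl, Or.inl ⟨Reachable.refl _, hr⟩⟩
  · exact ⟨3, H.X, by rw [iota_X]; rfl, Or.inl ⟨Reachable.refl _, hr⟩⟩
  · exact ⟨0, H.Y, by rw [iota_Y]; rfl, Or.inr ⟨Reachable.refl _, hr⟩⟩

lemma not_reach_term_term {σ : Fin 4 → Bool}
    (hσ : ∀ k, connT B k → σ (s4 k) = σ (e4 k)) {p q : Fin 4} (hpq : σ p ≠ σ q) :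
    ¬(Kg B).Reachable (term H p) (term H q) := by
  set U : Set (Wt H) := {w : Wt H | ∃ k c, w = H.iota13 k c ∧
      (((Gb B k).Reachable c H.X ∧ σ (s4 k) = true) ∨
       ((Gb B k).Reachable c H.Y ∧ σ (e4 k) = true))} with hUdef
  have hclosed : ∀ u w, u ∈ U → (Kg B).Adj u w → w ∈ U := by
    rintro u w ⟨k, c, rfl, hcase⟩ hadj
    obtain ⟨m, x, y, hxy, hux, rfl⟩ := K_adj.mp hadj
    by_cases hkm : k = m
    · subst hkm
      have hxc : c = x := iota_injective k hux
      subst hxc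
      rcases hcase with ⟨hrX, hs⟩ | ⟨hrY, hs⟩
      · exact ⟨k, y, rfl, Or.inl ⟨hxy.symm.reachable.trans hrX, hs⟩⟩
      · exact ⟨k, y, rfl, Or.inr ⟨hxy.symm.reachable.trans hrY, hs⟩⟩
    · obtain ⟨p', hp1, hp2⟩ := iota_cross hkm hux
      have hσp' : σ p' = true := by
        rcases hcase with ⟨hrX, hs⟩ | ⟨hrY, hs⟩ <;>
          rcases hp1 with ⟨rfl, rfl⟩ | ⟨rfl, rfl⟩
        · exact hs
        · rw [← hσ k hrX.symm]; exact hs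
        · rw [hσ k hrY]; exact hs
        · exact hs
      rcases hp2 with ⟨rfl, hp2⟩ | ⟨rfl, hp2⟩
      · exact ⟨m, y, rfl, Or.inl ⟨hxy.symm.reachable, by rw [← hp2]; exact hσp'⟩⟩
      · exact ⟨m, y, rfl, Or.inr ⟨hxy.symm.reachable, by rw [← hp2]; exact hσp'⟩⟩
  have hU_sig : ∀ r : Fin 4, term H r ∈ U → σ r = true := by
    rintro r ⟨k, c, hterm, hcase⟩
    rcases iota_eq_term.mp hterm.symm with ⟨rfl, rfl⟩ | ⟨rfl, rfl⟩
    · rcases hcase with ⟨-, hs⟩ | ⟨hrY, hs⟩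
      · exact hs
      · rw [hσ k hrY]; exact hs
    · rcases hcase with ⟨hrX, hs⟩ | ⟨-, hs⟩
      · rw [← hσ k hrX.symm]; exact hs
      · exact hs
  intro hreach
  cases hb : σ p with
  | true =>
    have := hU_sig q (mem_closure hclosed hreach (term_mem_U hb))
    exact hpq (hb.trans this.symm)
  | false =>
    have hq : σ q = true := by
      cases hq' : σ q with
      | true => rfl
      | false => exact absurd (hb.trans hq'.symm) hpq
    have := hU_sig p (mem_closure hclosed hreach.symm (term_mem_U hq))
    rw [this] at hb
    exact Bool.noConfusion hb

/-- side indicator for the cycle of terminals with edges `i`, `j` removed -/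
def sig (i j p : Fin 4) : Bool :=
  if (min i j, max i j) = (0, 1) then decide (p = 0)
  else if (min i j, max i j) = (0, 2) then decide (p.val ≤ 1)
  else if (min i j, max i j) = (0, 3) then decide (p = 3)
  else if (min i j, max i j) = (1, 2) then decide (p = 1)
  else if (min i j, max i j) = (1, 3) then decide (p = 1 ∨ p = 2)
  else decide (p = 2)

lemma sig_P1 : ∀ i j k : Fin 4, i ≠ j → k ≠ i → k ≠ j →
    sig i j (s4 k) = sig i j (e4 k) := by decide

lemma sig_P2 : ∀ i j : Fin 4, i ≠ j → ∃ p q, sig i j p ≠ sig i j q := by decide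

lemma sig_P3 : ∀ j : Fin 4, j ≠ 0 → sig 0 j 0 ≠ sig 0 j 3 := by decide

lemma sig_P4 : ∀ i j : Fin 4, i ≠ j → i ≠ 0 → j ≠ 0 →
    ∃ r, sig i j r ≠ sig i j 0 ∧ sig i j r ≠ sig i j 3 := by decide

lemma sig_hyp {i j : Fin 4} (hij : i ≠ j) (hi : ¬connT B i) (hj : ¬connT B j) :
    ∀ k, connT B k → sig i j (s4 k) = sig i j (e4 k) := by
  intro k hk
  by_cases hki : k = i
  · exact absurd hk (hki ▸ hi)
  · by_cases hkj : k = j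
    · exact absurd hk (hkj ▸ hj)
    · exact sig_P1 i j k hij hki hkj

end STAux

namespace STAux
open SimpleGraph

variable {H : TTG} {B : Fin 4 → Finset (Sym2 H.V)}

lemma reachT_of_connected (hK : (Kg B).Connected) (i : Fin 4) : reachT B i := by
  intro a
  by_contra hcon
  push_neg at hcon
  exact not_reach_term hcon.1 hcon.2 0 (hK.preconnected _ _)

lemma conn_or_conn (hK : (Kg B).Connected) {i j : Fin 4} (hij : i ≠ j) :
    connT B i ∨ connT B j := by
  by_contra hcon
  push_neg at hcon
  obtain ⟨p, q, hpq⟩ := sig_P2 i j hij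
  exact not_reach_term_term (sig_hyp hij hcon.1 hcon.2) hpq (hK.preconnected _ _)

lemma term_reach_zero (hk : ∀ k ≠ (0 : Fin 4), connT B k) (hc0 : ¬ connT B 0)
    (p : Fin 4) : (Kg B).Reachable (term H p) (term H 0) := by
  have r1 := conn_reach_term (hk 1 (by decide))
  have r2 := conn_reach_term (hk 2 (by decide))
  have r3 := conn_reach_term (hk 3 (by decide))
  simp only [s4_1, s4_2, s4_3, e4_1, e4_2, e4_3] at r1 r2 r3
  fin_cases p
  · exact Reachable.refl _
  · exact r1.symm
  · exact (r2.symm.trans r1.symm)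
  · exact (r3.symm.trans (r2.symm.trans r1.symm))

lemma term_reach_all (hcc : ∀ i j, i ≠ j → connT B i ∨ connT B j) (p : Fin 4) :
    (Kg B).Reachable (term H p) (term H 0) := by
  by_cases hc0 : connT B 0
  · have r0 := conn_reach_term hc0
    simp only [s4_0, e4_0] at r0
    -- T0 ~ T3.  At most one of 1,2,3 fails.
    by_cases hc2 : connT B 2
    · have r2 := conn_reach_term hc2
      simp only [s4_2, e4_2] at r2
      -- T1 ~ T2
      rcases hcc 1 3 (by decide) with hc1 | hc3
      · have r1 := conn_reach_term hc1
        simp only [s4_1, e4_1] at r1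
        fin_cases p
        · exact Reachable.refl _
        · exact r1.symm
        · exact r2.symm.trans r1.symm
        · exact r0.symm
      · have r3 := conn_reach_term hc3
        simp only [s4_3, e4_3] at r3
        fin_cases p
        · exact Reachable.refl _
        · exact (r2.trans (r3.trans r0.symm))
        · exact (r3.trans r0.symm)
        · exact r0.symm
    · have hc1 : connT B 1 := (hcc 1 2 (by decide)).resolve_right hc2
      have hc3 : connT B 3 := (hcc 3 2 (by decide)).resolve_right hc2
      have r1 := conn_reach_term hc1
      have r3 := conn_reach_term hc3
      simp only [s4_1, e4_1, s4_3, e4_3] at r1 r3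
      fin_cases p
      · exact Reachable.refl _
      · exact r1.symm
      · exact r3.trans r0.symm
      · exact r0.symm
  · have hk : ∀ k ≠ (0 : Fin 4), connT B k := by
      intro k hk0
      exact (hcc k 0 hk0).resolve_right hc0
    exact term_reach_zero hk hc0 p

lemma connected_of (hre : ∀ i, reachT B i)
    (hcc : ∀ i j, i ≠ j → connT B i ∨ connT B j) : (Kg B).Connected := by
  have : Nonempty (Wt H) := ⟨term H 0⟩
  have key : ∀ w, (Kg B).Reachable w (term H 0) := by
    intro w
    obtain ⟨i, a, rfl⟩ := iota_surj w
    rcases hre i a with h | h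
    · exact ((reach_map h).trans (by rw [iota_X]; exact term_reach_all hcc (s4 i)))
    · exact ((reach_map h).trans (by rw [iota_Y]; exact term_reach_all hcc (e4 i)))
  exact ⟨fun u w => (key u).trans (key w).symm⟩

/- ### separating-forest versions -/

lemma reachT_of_reach03
    (hall : ∀ w, (Kg B).Reachable w (term H 0) ∨ (Kg B).Reachable w (term H 3))
    (i : Fin 4) : reachT B i := by
  intro a
  by_contra hcon
  push_neg at hcon
  rcases hall (H.iota13 i a) with h | h
  · exact not_reach_term hcon.1 hcon.2 0 h
  · exact not_reach_term hcon.1 hcon.2 3 h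

lemma not_conn0 (hnr : ¬(Kg B).Reachable (term H 0) (term H 3)) : ¬connT B 0 := by
  intro hc
  have := conn_reach_term hc
  simp only [s4_0, e4_0] at this
  exact hnr this

lemma atmost_one_nonzero
    (hall : ∀ w, (Kg B).Reachable w (term H 0) ∨ (Kg B).Reachable w (term H 3))
    {i j : Fin 4} (hij : i ≠ j) (hi0 : i ≠ 0) (hj0 : j ≠ 0)
    (hi : ¬connT B i) (hj : ¬connT B j) : False := by
  obtain ⟨r, hr0, hr3⟩ := sig_P4 i j hij hi0 hj0
  rcases hall (term H r) with h | h
  · exact not_reach_term_term (sig_hyp hij hi hj) hr0 h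
  · exact not_reach_term_term (sig_hyp hij hi hj) hr3 h

lemma atleast_one_nonzero (hnr : ¬(Kg B).Reachable (term H 0) (term H 3))
    (h1 : connT B 1) (h2 : connT B 2) (h3 : connT B 3) : False := by
  have r1 := conn_reach_term h1
  have r2 := conn_reach_term h2
  have r3 := conn_reach_term h3
  simp only [s4_1, e4_1, s4_2, e4_2, s4_3, e4_3] at r1 r2 r3
  exact hnr (r1.trans (r2.trans r3))

lemma not_reach_03 {k : Fin 4} (hk0 : k ≠ 0) (h0 : ¬connT B 0) (hk : ¬connT B k) :
    ¬(Kg B).Reachable (term H 0) (term H 3) :=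
  not_reach_term_term (sig_hyp (fun hh => hk0 hh.symm) h0 hk) (sig_P3 k hk0)

lemma all_reach_03 {k : Fin 4} (hk0 : k ≠ 0) (hre : ∀ i, reachT B i)
    (hconn : ∀ j, j ≠ 0 → j ≠ k → connT B j) :
    ∀ w, (Kg B).Reachable w (term H 0) ∨ (Kg B).Reachable w (term H 3) := by
  have ht : ∀ p : Fin 4, (Kg B).Reachable (term H p) (term H 0) ∨
      (Kg B).Reachable (term H p) (term H 3) := by
    fin_cases k
    · exact absurd rfl hk0
    · -- copies 2 3 connect : T1~T2, T2~T3
      have r2 := conn_reach_term (hconn 2 (by decide) (by decide))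
      have r3 := conn_reach_term (hconn 3 (by decide) (by decide))
      simp only [s4_2, e4_2, s4_3, e4_3] at r2 r3
      intro p
      fin_cases p
      · exact Or.inl (Reachable.refl _)
      · exact Or.inr (r2.trans r3)
      · exact Or.inr r3
      · exact Or.inr (Reachable.refl _)
    · -- copies 1 3 : T0~T1, T2~T3
      have r1 := conn_reach_term (hconn 1 (by decide) (by decide))
      have r3 := conn_reach_term (hconn 3 (by decide) (by decide))
      simp only [s4_1, e4_1, s4_3, e4_3] at r1 r3
      intro p
      fin_cases p
      · exact Or.inl (Reachable.refl _)
      · exact Or.inl r1.symm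
      · exact Or.inr r3
      · exact Or.inr (Reachable.refl _)
    · -- copies 1 2 : T0~T1, T1~T2
      have r1 := conn_reach_term (hconn 1 (by decide) (by decide))
      have r2 := conn_reach_term (hconn 2 (by decide) (by decide))
      simp only [s4_1, e4_1, s4_2, e4_2] at r1 r2
      intro p
      fin_cases p
      · exact Or.inl (Reachable.refl _)
      · exact Or.inl r1.symm
      · exact Or.inl (r2.symm.trans r1.symm)
      · exact Or.inr (Reachable.refl _)
  intro w
  obtain ⟨i, a, rfl⟩ := iota_surj w
  rcases hre i a with h | h
  · have h' := reach_map (B := B) h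
    rw [iota_X] at h'
    exact (ht (s4 i)).imp h'.trans h'.trans
  · have h' := reach_map (B := B) h
    rw [iota_Y] at h'
    exact (ht (e4 i)).imp h'.trans h'.trans

lemma Gb_connected {i : Fin 4} (hr : reachT B i) (hc : connT B i) :
    (Gb B i).Connected := by
  have : Nonempty H.V := ⟨H.X⟩
  have key : ∀ a, (Gb B i).Reachable a H.X := by
    intro a
    rcases hr a with h | h
    · exact h
    · exact h.trans hc.symm
  exact ⟨fun a b => (key a).trans (key b).symm⟩

end STAux

namespace STAux
open SimpleGraph

variable {H : TTG} {B : Fin 4 → Finset (Sym2 H.V)}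

lemma card_subtype_ne {V : Type} [Fintype V] (Y : V) :
    Fintype.card {v : V // v ≠ Y} + 1 = Fintype.card V := by
  have h1 : Fintype.card {v : V // v = Y} = 1 := Fintype.card_subtype_eq Y
  have h2 := Fintype.card_subtype_compl (fun v : V => v = Y)
  have hpos : 0 < Fintype.card V := Fintype.card_pos_iff.mpr ⟨Y⟩
  have h3 : Fintype.card {v : V // v ≠ Y} = Fintype.card {v : V // ¬ v = Y} := rfl
  omega

lemma card_Wt : Fintype.card (Wt H) + 4 = 4 * Fintype.card H.V := by
  have h1 := card_subtype_ne (H.Y)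
  have h2 := card_subtype_ne (H.X)
  have h3 : Fintype.card (Wt H) = Fintype.card {v : H.V // v ≠ H.Y} +
      Fintype.card (Fin 3 × {v : H.V // v ≠ H.X}) := Fintype.card_sum
  rw [Fintype.card_prod, Fintype.card_fin] at h3
  omega

lemma card_step_V : Fintype.card (TTG.step13 H).V + 4 = 4 * Fintype.card H.V := by
  have h : Fintype.card (TTG.step13 H).V = Fintype.card (Wt H) :=
    Fintype.card_congr (Equiv.refl (Wt H))
  rw [h]
  exact card_Wt

lemma step_X : (TTG.step13 H).X = term H 0 := rfl
lemma step_Y : (TTG.step13 H).Y = term H 3 := rfl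

lemma term03_ne : term H 0 ≠ term H 3 := by
  rw [term0, term3]
  simp

/- conversions -/
lemma connT_of_tree {j : Fin 4} (h : IsSTree H.G (B j)) : connT B j :=
  h.2.1.preconnected H.X H.Y

lemma reachT_of_tree {j : Fin 4} (h : IsSTree H.G (B j)) : reachT B j :=
  fun a => Or.inl (h.2.1.preconnected a H.X)

lemma not_connT_of_forest {j : Fin 4} (h : IsSForest H.G H.X H.Y (B j)) : ¬connT B j :=
  h.2.2.1

lemma reachT_of_forest {j : Fin 4} (h : IsSForest H.G H.X H.Y (B j)) : reachT B j :=
  h.2.2.2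

lemma not_tree_and_forest {A : Finset (Sym2 H.V)} (ht : IsSTree H.G A)
    (hf : IsSForest H.G H.X H.Y A) : False :=
  hf.2.2.1 (ht.2.1.preconnected H.X H.Y)

/- counting helpers for pieces -/
lemma piece_ge_tree {i : Fin 4} (hBi : B i ⊆ H.G.edgeFinset)
    (hc : (Gb B i).Connected) : Fintype.card H.V ≤ (B i).card + 1 := by
  have := card_le_of_connected hc
  rwa [edgeSet_fromFinset hBi, Set.ncard_coe_finset] at this

lemma piece_ge_forest {i : Fin 4} (hBi : B i ⊆ H.G.edgeFinset) (hri : reachT B i) :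
    Fintype.card H.V ≤ (B i).card + 2 := by
  have hconn := connected_insertXY H.hXY hBi hri
  have := card_le_of_connected hconn
  rw [edgeSet_insertXY H.hXY hBi] at this
  have hcard : (insert s(H.X, H.Y) (↑(B i) : Set (Sym2 H.V))).ncard ≤ (B i).card + 1 := by
    refine le_trans (Set.ncard_insert_le _ _) ?_
    rw [Set.ncard_coe_finset]
  omega

lemma piece_tree {i : Fin 4} (hBi : B i ⊆ H.G.edgeFinset) (hri : reachT B i)
    (hci : connT B i) (hc : (B i).card + 1 = Fintype.card H.V) : IsSTree H.G (B i) :=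
  isSTree_of_card hBi (Gb_connected hri hci) hc

lemma piece_forest {i : Fin 4} (hBi : B i ⊆ H.G.edgeFinset) (hri : reachT B i)
    (hci : ¬connT B i) (hc : (B i).card + 2 = Fintype.card H.V) :
    IsSForest H.G H.X H.Y (B i) :=
  isSForest_of_card H.hXY hBi hri hci hc

/- pigeonhole helpers -/
lemma pigeon4_tree {f : Fin 4 → ℕ} {n : ℕ} {i₀ : Fin 4} (h₀ : n ≤ f i₀ + 2)
    (h : ∀ j, j ≠ i₀ → n ≤ f j + 1) (hsum : f 0 + f 1 + f 2 + f 3 + 5 = 4 * n) :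
    f i₀ + 2 = n ∧ ∀ j, j ≠ i₀ → f j + 1 = n := by
  have a0 : i₀ ≠ 0 → n ≤ f 0 + 1 := fun hh => h 0 (fun c => hh c.symm)
  have a1 : i₀ ≠ 1 → n ≤ f 1 + 1 := fun hh => h 1 (fun c => hh c.symm)
  have a2 : i₀ ≠ 2 → n ≤ f 2 + 1 := fun hh => h 2 (fun c => hh c.symm)
  have a3 : i₀ ≠ 3 → n ≤ f 3 + 1 := fun hh => h 3 (fun c => hh c.symm)
  have key : f i₀ + 2 = n ∧ (i₀ ≠ 0 → f 0 + 1 = n) ∧ (i₀ ≠ 1 → f 1 + 1 = n) ∧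
      (i₀ ≠ 2 → f 2 + 1 = n) ∧ (i₀ ≠ 3 → f 3 + 1 = n) := by
    fin_cases i₀ <;>
      simp only [Fin.reduceFinMk, ne_eq, not_true_eq_false, not_false_eq_true,
        IsEmpty.forall_iff, forall_const, Fin.reduceEq] at h₀ a0 a1 a2 a3 ⊢ <;>
      refine ⟨by omega, ?_, ?_, ?_, ?_⟩ <;> first | trivial | exact (by omega) | (intro hh; omega)
  refine ⟨key.1, fun j hj => ?_⟩
  fin_cases j <;>
    simp only [Fin.reduceFinMk] at hj ⊢ <;>
    [exact key.2.1 (fun c => hj c.symm); exact key.2.2.1 (fun c => hj c.symm);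
     exact key.2.2.2.1 (fun c => hj c.symm); exact key.2.2.2.2 (fun c => hj c.symm)]

lemma pigeon4_forest {f : Fin 4 → ℕ} {n : ℕ} {k : Fin 4} (hk0 : k ≠ 0)
    (h₀ : n ≤ f 0 + 2) (hk : n ≤ f k + 2) (h : ∀ j, j ≠ 0 → j ≠ k → n ≤ f j + 1)
    (hsum : f 0 + f 1 + f 2 + f 3 + 6 = 4 * n) :
    f 0 + 2 = n ∧ f k + 2 = n ∧ ∀ j, j ≠ 0 → j ≠ k → f j + 1 = n := by
  have a1 : k ≠ 1 → n ≤ f 1 + 1 := fun hh => h 1 (by decide) (fun c => hh c.symm)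
  have a2 : k ≠ 2 → n ≤ f 2 + 1 := fun hh => h 2 (by decide) (fun c => hh c.symm)
  have a3 : k ≠ 3 → n ≤ f 3 + 1 := fun hh => h 3 (by decide) (fun c => hh c.symm)
  have key : f 0 + 2 = n ∧ f k + 2 = n ∧ (k ≠ 1 → f 1 + 1 = n) ∧
      (k ≠ 2 → f 2 + 1 = n) ∧ (k ≠ 3 → f 3 + 1 = n) := by
    fin_cases k <;>
      simp only [Fin.reduceFinMk, ne_eq, not_true_eq_false, not_false_eq_true,
        IsEmpty.forall_iff, forall_const, Fin.reduceEq] at hk0 hk a1 a2 a3 ⊢ <;>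
      first
      | exact absurd rfl hk0
      | (refine ⟨by omega, by omega, ?_, ?_, ?_⟩ <;>
          first | trivial | exact (by omega) | (intro hh; omega))
  refine ⟨key.1, key.2.1, fun j hj0 hjk => ?_⟩
  fin_cases j <;>
    simp only [Fin.reduceFinMk] at hj0 hjk ⊢ <;>
    first
    | exact absurd rfl hj0
    | exact key.2.2.1 (fun c => hjk c.symm)
    | exact key.2.2.2.1 (fun c => hjk c.symm)
    | exact key.2.2.2.2 (fun c => hjk c.symm)

lemma sum4_of_tree {f : Fin 4 → ℕ} {n : ℕ} {i₀ : Fin 4} (h₀ : f i₀ + 2 = n)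
    (h : ∀ j, j ≠ i₀ → f j + 1 = n) : f 0 + f 1 + f 2 + f 3 + 5 = 4 * n := by
  have a0 : i₀ ≠ 0 → f 0 + 1 = n := fun hh => h 0 (fun c => hh c.symm)
  have a1 : i₀ ≠ 1 → f 1 + 1 = n := fun hh => h 1 (fun c => hh c.symm)
  have a2 : i₀ ≠ 2 → f 2 + 1 = n := fun hh => h 2 (fun c => hh c.symm)
  have a3 : i₀ ≠ 3 → f 3 + 1 = n := fun hh => h 3 (fun c => hh c.symm)
  fin_cases i₀ <;>
    simp only [Fin.reduceFinMk, ne_eq, not_true_eq_false, not_false_eq_true,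
      IsEmpty.forall_iff, forall_const, Fin.reduceEq] at h₀ a0 a1 a2 a3 <;>
    omega

lemma sum4_of_forest {f : Fin 4 → ℕ} {n : ℕ} {k : Fin 4} (hk0 : k ≠ 0)
    (h₀ : f 0 + 2 = n) (hk : f k + 2 = n) (h : ∀ j, j ≠ 0 → j ≠ k → f j + 1 = n) :
    f 0 + f 1 + f 2 + f 3 + 6 = 4 * n := by
  have a1 : k ≠ 1 → f 1 + 1 = n := fun hh => h 1 (by decide) (fun c => hh c.symm)
  have a2 : k ≠ 2 → f 2 + 1 = n := fun hh => h 2 (by decide) (fun c => hh c.symm)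
  have a3 : k ≠ 3 → f 3 + 1 = n := fun hh => h 3 (by decide) (fun c => hh c.symm)
  fin_cases k <;>
    simp only [Fin.reduceFinMk, ne_eq, not_true_eq_false, not_false_eq_true,
      IsEmpty.forall_iff, forall_const, Fin.reduceEq] at hk0 hk a1 a2 a3 <;>
    first | exact absurd rfl hk0 | omega

lemma phi_sum_card (hB : ∀ i, B i ⊆ H.G.edgeFinset) :
    (phi H B).card = (B 0).card + (B 1).card + (B 2).card + (B 3).card := by
  rw [phi_card hB, Fin.sum_univ_four]

/-- Main characterization: spanning trees of the merge. -/
theorem isSTree_phi_iff (hB : ∀ i, B i ⊆ H.G.edgeFinset) :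
    IsSTree (TTG.step13 H).G (phi H B) ↔
      ∃ i, IsSForest H.G H.X H.Y (B i) ∧ ∀ j, j ≠ i → IsSTree H.G (B j) := by
  constructor
  · intro h
    have hcard : (phi H B).card + 1 = Fintype.card (TTG.step13 H).V := h.card
    rw [phi_sum_card hB] at hcard
    have hWt := card_step_V (H := H)
    set n := Fintype.card H.V with hn
    have hsum : (B 0).card + (B 1).card + (B 2).card + (B 3).card + 5 = 4 * n := by omega
    have hconn : (Kg B).Connected := h.2.1
    have hre : ∀ i, reachT B i := reachT_of_connected hconn
    by_cases hall : ∀ i, connT B i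
    · exfalso
      have hge : ∀ i : Fin 4, n ≤ (B i).card + 1 := fun i =>
        piece_ge_tree (hB i) (Gb_connected (hre i) (hall i))
      have g0 := hge 0; have g1 := hge 1; have g2 := hge 2; have g3 := hge 3
      omega
    · push_neg at hall
      obtain ⟨i₀, hi₀⟩ := hall
      have hothers : ∀ j, j ≠ i₀ → connT B j := fun j hj =>
        (conn_or_conn hconn hj).resolve_right hi₀
      have h₀ : n ≤ (B i₀).card + 2 := piece_ge_forest (hB i₀) (hre i₀)
      have hchain : ∀ j, j ≠ i₀ → n ≤ (B j).card + 1 := fun j hj =>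
        piece_ge_tree (hB j) (Gb_connected (hre j) (hothers j hj))
      obtain ⟨hc₀, hcj⟩ := pigeon4_tree h₀ hchain hsum
      exact ⟨i₀, piece_forest (hB i₀) (hre i₀) hi₀ hc₀,
        fun j hj => piece_tree (hB j) (hre j) (hothers j hj) (hcj j hj)⟩
  · rintro ⟨i, hsp, htr⟩
    have hre : ∀ j, reachT B j := by
      intro j
      by_cases hj : j = i
      · exact hj ▸ reachT_of_forest hsp
      · exact reachT_of_tree (htr j hj)
    have hcc : ∀ p q, p ≠ q → connT B p ∨ connT B q := by
      intro p q hpq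
      by_cases hp : p = i
      · subst hp
        exact Or.inr (connT_of_tree (htr q (Ne.symm hpq)))
      · exact Or.inl (connT_of_tree (htr p hp))
    have hconn := connected_of hre hcc
    have hcards : (phi H B).card + 1 = Fintype.card (TTG.step13 H).V := by
      rw [phi_sum_card hB]
      have hWt := card_step_V (H := H)
      have h₀ : (B i).card + 2 = Fintype.card H.V := hsp.card H.hXY
      have hj : ∀ j, j ≠ i → (B j).card + 1 = Fintype.card H.V := fun j hjx =>
        (htr j hjx).card
      have := sum4_of_tree h₀ hj
      omega
    exact isSTree_of_card (phi_subset_edgeFinset hB) hconn hcards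

/-- Main characterization: separating spanning forests of the merge. -/
theorem isSForest_phi_iff (hB : ∀ i, B i ⊆ H.G.edgeFinset) :
    IsSForest (TTG.step13 H).G (TTG.step13 H).X (TTG.step13 H).Y (phi H B) ↔
      ∃ k, k ≠ (0 : Fin 4) ∧ IsSForest H.G H.X H.Y (B 0) ∧ IsSForest H.G H.X H.Y (B k) ∧
        ∀ j, j ≠ 0 → j ≠ k → IsSTree H.G (B j) := by
  rw [step_X, step_Y]
  constructor
  · rintro ⟨hsub, hacyc, hnr, hall⟩
    have hcard : (phi H B).card + 2 = Fintype.card (TTG.step13 H).V :=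
      IsSForest.card term03_ne ⟨hsub, hacyc, hnr, hall⟩
    rw [phi_sum_card hB] at hcard
    have hWt := card_step_V (H := H)
    set n := Fintype.card H.V with hn
    have hsum : (B 0).card + (B 1).card + (B 2).card + (B 3).card + 6 = 4 * n := by omega
    have hre : ∀ i, reachT B i := reachT_of_reach03 hall
    have hc0 : ¬connT B 0 := not_conn0 hnr
    -- find the failing nonzero copy
    have hex : ∃ k : Fin 4, k ≠ 0 ∧ ¬connT B k := by
      by_cases h1 : connT B 1
      · by_cases h2 : connT B 2
        · by_cases h3 : connT B 3
          · exact absurd (atleast_one_nonzero hnr h1 h2 h3) not_false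
          · exact ⟨3, by decide, h3⟩
        · exact ⟨2, by decide, h2⟩
      · exact ⟨1, by decide, h1⟩
    obtain ⟨k, hk0, hkc⟩ := hex
    have hothers : ∀ j, j ≠ 0 → j ≠ k → connT B j := by
      intro j hj0 hjk
      by_contra hj
      exact atmost_one_nonzero hall hjk hj0 hk0 hj hkc
    have h₀ : n ≤ (B 0).card + 2 := piece_ge_forest (hB 0) (hre 0)
    have hkge : n ≤ (B k).card + 2 := piece_ge_forest (hB k) (hre k)
    have hchain : ∀ j, j ≠ 0 → j ≠ k → n ≤ (B j).card + 1 := fun j h1 h2 =>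
      piece_ge_tree (hB j) (Gb_connected (hre j) (hothers j h1 h2))
    obtain ⟨hcc0, hcck, hccj⟩ := pigeon4_forest hk0 h₀ hkge hchain hsum
    exact ⟨k, hk0, piece_forest (hB 0) (hre 0) hc0 hcc0,
      piece_forest (hB k) (hre k) hkc hcck,
      fun j h1 h2 => piece_tree (hB j) (hre j) (hothers j h1 h2) (hccj j h1 h2)⟩
  · rintro ⟨k, hk0, h0, hk, htr⟩
    have hre : ∀ j, reachT B j := by
      intro j
      by_cases hj0 : j = 0
      · exact hj0 ▸ reachT_of_forest h0
      · by_cases hjk : j = k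
        · exact hjk ▸ reachT_of_forest hk
        · exact reachT_of_tree (htr j hj0 hjk)
    have hconn' : ∀ j, j ≠ 0 → j ≠ k → connT B j := fun j h1 h2 =>
      connT_of_tree (htr j h1 h2)
    have hnr : ¬(Kg B).Reachable (term H 0) (term H 3) :=
      not_reach_03 hk0 (not_connT_of_forest h0) (not_connT_of_forest hk)
    have hall := all_reach_03 hk0 hre hconn'
    have hcards : (phi H B).card + 2 = Fintype.card (TTG.step13 H).V := by
      rw [phi_sum_card hB]
      have hWt := card_step_V (H := H)
      have hc0 : (B 0).card + 2 = Fintype.card H.V := h0.card H.hXY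
      have hck : (B k).card + 2 = Fintype.card H.V := hk.card H.hXY
      have hcj : ∀ j, j ≠ 0 → j ≠ k → (B j).card + 1 = Fintype.card H.V := fun j h1 h2 =>
        (htr j h1 h2).card
      have := sum4_of_forest hk0 hc0 hck hcj
      omega
    exact isSForest_of_card term03_ne (phi_subset_edgeFinset hB) hall hnr hcards

end STAux

namespace STAux
open SimpleGraph

variable {H : TTG}

/-- transfer counting along the `phi`/`psi` bijection -/
lemma count_eq_count (P : Finset (Sym2 (Wt H)) → Prop)
    (R : (Fin 4 → Finset (Sym2 H.V)) → Prop)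
    (hP : ∀ A, P A → A ⊆ (TTG.step13 H).G.edgeFinset)
    (hR : ∀ B, R B → ∀ i, B i ⊆ H.G.edgeFinset)
    (hiff : ∀ B, (∀ i, B i ⊆ H.G.edgeFinset) → (P (phi H B) ↔ R B)) :
    Nat.card {A : Finset (Sym2 (Wt H)) // P A} =
      Nat.card {B : Fin 4 → Finset (Sym2 H.V) // R B} := by
  refine Nat.card_congr ⟨fun A => ⟨psi H A.1, ?_⟩, fun B => ⟨phi H B.1, ?_⟩, ?_, ?_⟩
  · have h1 := phi_psi (hP A.1 A.2)
    exact (hiff _ (fun i => psi_subset i)).mp (by rw [h1]; exact A.2)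
  · exact (hiff B.1 (hR B.1 B.2)).mpr B.2
  · rintro ⟨A, hA⟩
    exact Subtype.ext (phi_psi (hP A hA))
  · rintro ⟨B, hB⟩
    exact Subtype.ext (psi_phi (hR B hB))

lemma card_exists_eq_sum {α : Type} [Fintype α] {ι : Type} [Fintype ι]
    (Q : ι → α → Prop) (huniq : ∀ a i j, Q i a → Q j a → i = j) :
    Nat.card {a : α // ∃ i, Q i a} = ∑ i, Nat.card {a : α // Q i a} := by
  have e : (Σ i, {a : α // Q i a}) ≃ {a : α // ∃ i, Q i a} := by
    refine Equiv.ofBijective (fun x => ⟨x.2.1, ⟨x.1, x.2.2⟩⟩) ⟨?_, ?_⟩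
    · rintro ⟨i, a, ha⟩ ⟨j, b, hb⟩ h
      simp only [Subtype.mk.injEq] at h
      obtain rfl : a = b := h
      obtain rfl : i = j := huniq a i j ha hb
      rfl
    · rintro ⟨a, i, ha⟩
      exact ⟨⟨i, a, ha⟩, rfl⟩
  rw [← Nat.card_congr e, Nat.card_eq_fintype_card, Fintype.card_sigma]
  exact Finset.sum_congr rfl fun i _ => (Nat.card_eq_fintype_card).symm

lemma card_pi_subtype {ι : Type} [Fintype ι] {β : Type} [Fintype β] (P : ι → β → Prop) :
    Nat.card {f : ι → β // ∀ i, P i (f i)} = ∏ i, Nat.card {b : β // P i b} := by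
  rw [Nat.card_congr (Equiv.subtypePiEquivPi (p := P)), Nat.card_eq_fintype_card,
    Fintype.card_pi]
  exact Finset.prod_congr rfl fun i _ => (Nat.card_eq_fintype_card).symm

/-- the two kinds of counts -/
def tC (H : TTG) : ℕ := Nat.card {A : Finset (Sym2 H.V) // IsSTree H.G A}
def fC (H : TTG) : ℕ := Nat.card {A : Finset (Sym2 H.V) // IsSForest H.G H.X H.Y A}

/-- per-coordinate predicate for the tree decomposition -/
def Ptree (H : TTG) (i j : Fin 4) (C : Finset (Sym2 H.V)) : Prop :=
  (j = i → IsSForest H.G H.X H.Y C) ∧ (j ≠ i → IsSTree H.G C)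

lemma card_Ptree (i j : Fin 4) :
    Nat.card {C : Finset (Sym2 H.V) // Ptree H i j C} = if j = i then fC H else tC H := by
  by_cases h : j = i
  · subst h
    rw [if_pos rfl]
    exact Nat.card_congr (Equiv.subtypeEquivRight (fun C => by simp [Ptree]))
  · rw [if_neg h]
    exact Nat.card_congr (Equiv.subtypeEquivRight (fun C => by simp [Ptree, h]))

lemma prod_ite_fin4 {a t : ℕ} (i : Fin 4) :
    (∏ j : Fin 4, if j = i then a else t) = a * t ^ 3 := by
  fin_cases i <;> simp [Fin.prod_univ_four] <;> ring

theorem tC_step : tC (TTG.step13 H) = 4 * fC H * tC H ^ 3 := by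
  have key : tC (TTG.step13 H) =
      Nat.card {B : Fin 4 → Finset (Sym2 H.V) // ∃ i, ∀ j, Ptree H i j (B j)} := by
    refine count_eq_count _ _ (fun A hA => hA.1) ?_ ?_
    · rintro B ⟨i, hB⟩ j
      by_cases hj : j = i
      · exact ((hB j).1 hj).1
      · exact ((hB j).2 hj).1
    · intro B hB
      rw [isSTree_phi_iff hB]
      constructor
      · rintro ⟨i, hf, ht⟩
        exact ⟨i, fun j => ⟨fun hj => hj ▸ hf, fun hj => ht j hj⟩⟩
      · rintro ⟨i, hB'⟩
        exact ⟨i, (hB' i).1 rfl, fun j hj => (hB' j).2 hj⟩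
  rw [key, card_exists_eq_sum]
  · have : ∀ i : Fin 4, Nat.card {B : Fin 4 → Finset (Sym2 H.V) // ∀ j, Ptree H i j (B j)}
        = fC H * tC H ^ 3 := by
      intro i
      rw [card_pi_subtype]
      calc (∏ j : Fin 4, Nat.card {C : Finset (Sym2 H.V) // Ptree H i j C})
          = ∏ j : Fin 4, (if j = i then fC H else tC H) :=
            Finset.prod_congr rfl fun j _ => card_Ptree i j
        _ = fC H * tC H ^ 3 := prod_ite_fin4 i
    simp only [this, Finset.sum_const, Finset.card_univ, Fintype.card_fin, smul_eq_mul]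
    ring
  · intro B i j hi hj
    by_contra hij
    exact not_tree_and_forest ((hj i).2 (fun c => hij (c.symm ▸ rfl))) ((hi i).1 rfl)

/-- per-coordinate predicate for the forest decomposition -/
def Pfor (H : TTG) (k j : Fin 4) (C : Finset (Sym2 H.V)) : Prop :=
  (j = 0 → IsSForest H.G H.X H.Y C) ∧ (j = k → IsSForest H.G H.X H.Y C) ∧
    (j ≠ 0 → j ≠ k → IsSTree H.G C)

def Qfor (H : TTG) (k : Fin 4) (B : Fin 4 → Finset (Sym2 H.V)) : Prop :=
  k ≠ 0 ∧ ∀ j, Pfor H k j (B j)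

lemma card_Pfor {k : Fin 4} (hk : k ≠ 0) (j : Fin 4) :
    Nat.card {C : Finset (Sym2 H.V) // Pfor H k j C} =
      if j = 0 ∨ j = k then fC H else tC H := by
  by_cases h0 : j = 0
  · subst h0
    rw [if_pos (Or.inl rfl)]
    refine Nat.card_congr (Equiv.subtypeEquivRight (fun C => ?_))
    unfold Pfor
    constructor
    · rintro ⟨h, -, -⟩; exact h rfl
    · intro h; exact ⟨fun _ => h, fun _ => h, fun hc _ => absurd rfl hc⟩
  · by_cases hjk : j = k
    · subst hjk
      rw [if_pos (Or.inr rfl)]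
      refine Nat.card_congr (Equiv.subtypeEquivRight (fun C => ?_))
      unfold Pfor
      constructor
      · rintro ⟨-, h, -⟩; exact h rfl
      · intro h; exact ⟨fun hc => absurd hc h0, fun _ => h, fun _ hc => absurd rfl hc⟩
    · rw [if_neg (by tauto)]
      refine Nat.card_congr (Equiv.subtypeEquivRight (fun C => ?_))
      unfold Pfor
      constructor
      · rintro ⟨-, -, h⟩; exact h h0 hjk
      · intro h; exact ⟨fun hc => absurd hc h0, fun hc => absurd hc hjk, fun _ _ => h⟩

lemma prod_ite2_fin4 {a t : ℕ} {k : Fin 4} (hk : k ≠ 0) :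
    (∏ j : Fin 4, if j = 0 ∨ j = k then a else t) = a ^ 2 * t ^ 2 := by
  fin_cases k
  · exact absurd rfl hk
  all_goals simp [Fin.prod_univ_four] <;> ring

theorem fC_step : fC (TTG.step13 H) = 3 * fC H ^ 2 * tC H ^ 2 := by
  have key : fC (TTG.step13 H) =
      Nat.card {B : Fin 4 → Finset (Sym2 H.V) // ∃ k, Qfor H k B} := by
    refine count_eq_count _ _ (fun A hA => hA.1) ?_ ?_
    · rintro B ⟨k, hk0, hB⟩ j
      by_cases hj0 : j = 0
      · exact ((hB j).1 hj0).1
      · by_cases hjk : j = k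
        · exact ((hB j).2.1 hjk).1
        · exact ((hB j).2.2 hj0 hjk).1
    · intro B hB
      rw [isSForest_phi_iff hB]
      constructor
      · rintro ⟨k, hk0, h0, hk, ht⟩
        refine ⟨k, hk0, fun j => ⟨fun hj => hj ▸ h0, fun hj => hj ▸ hk,
          fun h1 h2 => ht j h1 h2⟩⟩
      · rintro ⟨k, hk0, hB'⟩
        exact ⟨k, hk0, (hB' 0).1 rfl, (hB' k).2.1 rfl, fun j h1 h2 => (hB' j).2.2 h1 h2⟩
  rw [key, card_exists_eq_sum]
  · have hval : ∀ k : Fin 4, k ≠ 0 →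
        Nat.card {B : Fin 4 → Finset (Sym2 H.V) // Qfor H k B} = fC H ^ 2 * tC H ^ 2 := by
      intro k hk
      have : Nat.card {B : Fin 4 → Finset (Sym2 H.V) // Qfor H k B} =
          Nat.card {B : Fin 4 → Finset (Sym2 H.V) // ∀ j, Pfor H k j (B j)} :=
        Nat.card_congr (Equiv.subtypeEquivRight (fun B => by simp [Qfor, hk]))
      rw [this, card_pi_subtype]
      calc (∏ j : Fin 4, Nat.card {C : Finset (Sym2 H.V) // Pfor H k j C})
          = ∏ j : Fin 4, (if j = 0 ∨ j = k then fC H else tC H) :=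
            Finset.prod_congr rfl fun j _ => card_Pfor hk j
        _ = fC H ^ 2 * tC H ^ 2 := prod_ite2_fin4 hk
    have h0 : Nat.card {B : Fin 4 → Finset (Sym2 H.V) // Qfor H 0 B} = 0 := by
      rw [Nat.card_eq_zero]
      left
      exact ⟨fun ⟨B, hB⟩ => hB.1 rfl⟩
    rw [Fin.sum_univ_four, h0, hval 1 (by decide), hval 2 (by decide), hval 3 (by decide)]
    ring
  · intro B k k' hk hk'
    by_contra hkk
    have h1 : IsSForest H.G H.X H.Y (B k) := (hk.2 k).2.1 rfl
    have h2 : IsSTree H.G (B k) := (hk'.2 k).2.2 hk.1 (fun c => hkk (c.symm ▸ rfl))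
    exact not_tree_and_forest h2 h1

end STAux

namespace STAux
open SimpleGraph

lemma base_card : Fintype.card TTG.base.V = 2 := rfl

lemma base_edge : ∀ e : Sym2 (Fin 2), e ∈ TTG.base.G.edgeFinset ↔ e = s(0, 1) := by
  intro e
  induction e using Sym2.ind with | _ a b =>
  rw [show s(a, b) ∈ TTG.base.G.edgeFinset ↔ TTG.base.G.Adj a b from mem_edgeFinset]
  have : TTG.base.G.Adj a b ↔ a ≠ b := Iff.rfl
  rw [this]
  constructor
  · intro h
    fin_cases a <;> fin_cases b <;> first | (exact absurd rfl h) | rfl | exact Sym2.eq_swap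
  · intro h
    rw [Sym2.eq_iff] at h
    rcases h with ⟨rfl, rfl⟩ | ⟨rfl, rfl⟩ <;> decide

lemma isSTree_base_iff (A : Finset (Sym2 (Fin 2))) :
    IsSTree TTG.base.G A ↔ A = {s(0, 1)} := by
  constructor
  · intro h
    have hcard : A.card + 1 = Fintype.card TTG.base.V := h.card
    rw [base_card] at hcard
    obtain ⟨e, he⟩ := Finset.card_eq_one.mp (show A.card = 1 by omega)
    subst he
    have := h.1 (Finset.mem_singleton_self e)
    replace this := (base_edge e).mp this
    rw [this]
  · rintro rfl
    have hsub : ({s((0 : Fin 2), (1 : Fin 2))} : Finset (Sym2 (Fin 2))) ⊆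
        TTG.base.G.edgeFinset := by
      intro e he
      rw [Finset.mem_singleton] at he
      refine (base_edge e).mpr ?_
      exact he
    have hadj : (fromEdgeSet (({s((0 : Fin 2), 1)} : Finset (Sym2 (Fin 2))) :
        Set (Sym2 (Fin 2)))).Adj 0 1 := by
      rw [fromEdgeSet_adj]
      exact ⟨by simp, by decide⟩
    have hconn : (fromEdgeSet (({s((0 : Fin 2), 1)} : Finset (Sym2 (Fin 2))) :
        Set (Sym2 (Fin 2)))).Connected := by
      have : Nonempty (Fin 2) := ⟨0⟩
      refine ⟨fun x y => ?_⟩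
      fin_cases x <;> fin_cases y
      · exact Reachable.refl _
      · exact hadj.reachable
      · exact hadj.symm.reachable
      · exact Reachable.refl _
    exact isSTree_of_card hsub hconn (by rw [base_card]; rfl)

lemma isSForest_base_iff (A : Finset (Sym2 (Fin 2))) :
    IsSForest TTG.base.G TTG.base.X TTG.base.Y A ↔ A = ∅ := by
  constructor
  · intro h
    have hcard : A.card + 2 = Fintype.card TTG.base.V := h.card TTG.base.hXY
    rw [base_card] at hcard
    exact Finset.card_eq_zero.mp (show A.card = 0 by omega)
  · rintro rfl
    refine ⟨Finset.empty_subset _, ?_, ?_, ?_⟩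
    · erw [Finset.coe_empty, fromEdgeSet_empty]
      intro v c hc
      cases c with
      | nil => exact hc.ne_nil rfl
      | cons h p => exact h.elim
    · erw [Finset.coe_empty, fromEdgeSet_empty, reachable_bot]
      exact TTG.base.hXY
    · intro v
      erw [Finset.coe_empty, fromEdgeSet_empty]
      fin_cases v
      · exact Or.inl (Reachable.refl _)
      · exact Or.inr (Reachable.refl _)

lemma tC_base : tC TTG.base = 1 := by
  haveI : Unique {A : Finset (Sym2 (Fin 2)) // A = ({s(0, 1)} : Finset (Sym2 (Fin 2)))} :=
    ⟨⟨⟨{s(0, 1)}, rfl⟩⟩, fun y => Subtype.ext y.2⟩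
  calc tC TTG.base
      = Nat.card {A : Finset (Sym2 (Fin 2)) // A = ({s(0, 1)} : Finset (Sym2 (Fin 2)))} :=
        Nat.card_congr (Equiv.subtypeEquivRight isSTree_base_iff)
    _ = 1 := Nat.card_unique

lemma fC_base : fC TTG.base = 1 := by
  haveI : Unique {A : Finset (Sym2 (Fin 2)) // A = (∅ : Finset (Sym2 (Fin 2)))} :=
    ⟨⟨⟨∅, rfl⟩⟩, fun y => Subtype.ext y.2⟩
  calc fC TTG.base
      = Nat.card {A : Finset (Sym2 (Fin 2)) // A = (∅ : Finset (Sym2 (Fin 2)))} :=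
        Nat.card_congr (Equiv.subtypeEquivRight isSForest_base_iff)
    _ = 1 := Nat.card_unique

end STAux

namespace STAux
open SimpleGraph

/-- (x, y, u, w) : exponents of 2 and 3 in the tree count and forest count. -/
def quad : ℕ → ℕ × ℕ × ℕ × ℕ
  | 0 => (0, 0, 0, 0)
  | n + 1 =>
    let q := quad n
    (2 + q.2.2.1 + 3 * q.1, q.2.2.2 + 3 * q.2.1, 2 * q.2.2.1 + 2 * q.1,
      1 + 2 * q.2.2.2 + 2 * q.2.1)

def xs (n : ℕ) : ℕ := (quad n).1
def ys (n : ℕ) : ℕ := (quad n).2.1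
def us (n : ℕ) : ℕ := (quad n).2.2.1
def ws (n : ℕ) : ℕ := (quad n).2.2.2

lemma xs_succ (n : ℕ) : xs (n + 1) = 2 + us n + 3 * xs n := rfl
lemma ys_succ (n : ℕ) : ys (n + 1) = ws n + 3 * ys n := rfl
lemma us_succ (n : ℕ) : us (n + 1) = 2 * us n + 2 * xs n := rfl
lemma ws_succ (n : ℕ) : ws (n + 1) = 1 + 2 * ws n + 2 * ys n := rfl

lemma counts_flower : ∀ n, tC (flower13 n) = 2 ^ xs n * 3 ^ ys n ∧
    fC (flower13 n) = 2 ^ us n * 3 ^ ws n := by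
  intro n
  induction n with
  | zero =>
    constructor
    · rw [show flower13 0 = TTG.base from rfl, tC_base]; rfl
    · rw [show flower13 0 = TTG.base from rfl, fC_base]; rfl
  | succ n ih =>
    have hstep : flower13 (n + 1) = TTG.step13 (flower13 n) := rfl
    constructor
    · rw [hstep, tC_step, ih.1, ih.2, xs_succ, ys_succ]
      ring
    · rw [hstep, fC_step, ih.1, ih.2, us_succ, ws_succ]
      ring

lemma quad_closed : ∀ n, 9 * xs n + 4 = 4 ^ (n + 1) + 6 * n ∧
    9 * ys n + 3 * n + 1 = 4 ^ n ∧ us n + 2 * n = xs n ∧ ws n = ys n + n := by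
  intro n
  induction n with
  | zero => refine ⟨rfl, rfl, rfl, rfl⟩
  | succ n ih =>
    obtain ⟨h1, h2, h3, h4⟩ := ih
    have p1 : (4 : ℕ) ^ (n + 2) = 4 * 4 ^ (n + 1) := by ring
    have p2 : (4 : ℕ) ^ (n + 1) = 4 * 4 ^ n := by ring
    refine ⟨?_, ?_, ?_, ?_⟩
    · rw [xs_succ]; omega
    · rw [ys_succ]; omega
    · rw [us_succ, xs_succ]; omega
    · rw [ws_succ, ys_succ]; omega

lemma card_flower : ∀ n, 3 * Fintype.card (flower13 n).V = 2 * 4 ^ n + 4 := by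
  intro n
  induction n with
  | zero =>
    rw [show flower13 0 = TTG.base from rfl, base_card]
    rfl
  | succ n ih =>
    have h := card_step_V (H := flower13 n)
    have hstep : flower13 (n + 1) = TTG.step13 (flower13 n) := rfl
    rw [hstep]
    have p2 : (4 : ℕ) ^ (n + 1) = 4 * 4 ^ n := by ring
    omega

lemma stc_eq (n : ℕ) : spanningTreeCount (flower13 n).G = tC (flower13 n) := rfl

end STAux

namespace STAux
open SimpleGraph Filter Real

lemma hxe (n : ℕ) : (xs n : ℝ) = (4 * 4 ^ n + 6 * n - 4) / 9 := by
  have h := (quad_closed n).1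
  have : (9 : ℝ) * xs n + 4 = 4 ^ (n + 1) + 6 * n := by exact_mod_cast congrArg (Nat.cast : ℕ → ℝ) h
  rw [pow_succ] at this
  field_simp
  linarith

lemma hye (n : ℕ) : (ys n : ℝ) = (4 ^ n - 3 * n - 1) / 9 := by
  have h := (quad_closed n).2.1
  have : (9 : ℝ) * ys n + 3 * n + 1 = 4 ^ n := by exact_mod_cast congrArg (Nat.cast : ℕ → ℝ) h
  field_simp
  linarith

lemma hce (n : ℕ) : (Fintype.card (flower13 n).V : ℝ) = (2 * 4 ^ n + 4) / 3 := by
  have h := card_flower n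
  have : (3 : ℝ) * (Fintype.card (flower13 n).V : ℝ) = 2 * 4 ^ n + 4 := by
    exact_mod_cast congrArg (Nat.cast : ℕ → ℝ) h
  field_simp
  linarith

lemma h4pos (n : ℕ) : (0 : ℝ) < 4 ^ n := by positivity

lemma ratio_x (n : ℕ) : (xs n : ℝ) / (Fintype.card (flower13 n).V : ℝ) =
    (4 + 6 * (n * (1 / 4 : ℝ) ^ n) - 4 * (1 / 4 : ℝ) ^ n) / (6 + 12 * (1 / 4 : ℝ) ^ n) := by
  have h4 := (h4pos n).ne'
  rw [hxe, hce, one_div, inv_pow]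
  have hb : (2:ℝ) * 4 ^ n + 4 ≠ 0 := by positivity
  have hd : (6:ℝ) + 12 * ((4:ℝ) ^ n)⁻¹ ≠ 0 := by positivity
  field_simp
  ring

lemma ratio_y (n : ℕ) : (ys n : ℝ) / (Fintype.card (flower13 n).V : ℝ) =
    (1 - 3 * (n * (1 / 4 : ℝ) ^ n) - (1 / 4 : ℝ) ^ n) / (6 + 12 * (1 / 4 : ℝ) ^ n) := by
  have h4 := (h4pos n).ne'
  rw [hye, hce, one_div, inv_pow]
  have hb : (2:ℝ) * 4 ^ n + 4 ≠ 0 := by positivity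
  have hd : (6:ℝ) + 12 * ((4:ℝ) ^ n)⁻¹ ≠ 0 := by positivity
  field_simp
  ring

lemma tendsto_r : Tendsto (fun n : ℕ => ((1 / 4 : ℝ)) ^ n) atTop (nhds 0) :=
  tendsto_pow_atTop_nhds_zero_of_lt_one (by norm_num) (by norm_num)

lemma tendsto_s : Tendsto (fun n : ℕ => (n : ℝ) * (1 / 4 : ℝ) ^ n) atTop (nhds 0) :=
  tendsto_self_mul_const_pow_of_lt_one (by norm_num) (by norm_num)

lemma tendsto_ratio_x : Tendsto (fun n : ℕ =>
    (xs n : ℝ) / (Fintype.card (flower13 n).V : ℝ)) atTop (nhds (2 / 3)) := by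
  have hnum : Tendsto (fun n : ℕ =>
      (4 : ℝ) + 6 * ((n : ℝ) * (1 / 4 : ℝ) ^ n) - 4 * (1 / 4 : ℝ) ^ n) atTop (nhds 4) := by
    have := (tendsto_const_nhds (x := (4 : ℝ)) (f := atTop)).add
      ((tendsto_s.const_mul 6)) |>.sub (tendsto_r.const_mul 4)
    simpa using this
  have hden : Tendsto (fun n : ℕ => (6 : ℝ) + 12 * (1 / 4 : ℝ) ^ n) atTop (nhds 6) := by
    have := (tendsto_const_nhds (x := (6 : ℝ)) (f := atTop)).add (tendsto_r.const_mul 12)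
    simpa using this
  have := hnum.div hden (by norm_num)
  rw [show (4 : ℝ) / 6 = 2 / 3 by norm_num] at this
  exact Tendsto.congr (fun n => (ratio_x n).symm) this

lemma tendsto_ratio_y : Tendsto (fun n : ℕ =>
    (ys n : ℝ) / (Fintype.card (flower13 n).V : ℝ)) atTop (nhds (1 / 6)) := by
  have hnum : Tendsto (fun n : ℕ =>
      (1 : ℝ) - 3 * ((n : ℝ) * (1 / 4 : ℝ) ^ n) - (1 / 4 : ℝ) ^ n) atTop (nhds 1) := by
    have := ((tendsto_const_nhds (x := (1 : ℝ)) (f := atTop)).sub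
      (tendsto_s.const_mul 3)).sub tendsto_r
    simpa using this
  have hden : Tendsto (fun n : ℕ => (6 : ℝ) + 12 * (1 / 4 : ℝ) ^ n) atTop (nhds 6) := by
    have := (tendsto_const_nhds (x := (6 : ℝ)) (f := atTop)).add (tendsto_r.const_mul 12)
    simpa using this
  have := hnum.div hden (by norm_num)
  rw [show (1 : ℝ) / 6 = 1 / 6 by norm_num] at this
  exact Tendsto.congr (fun n => (ratio_y n).symm) this

lemma log_count (n : ℕ) : Real.log (spanningTreeCount (flower13 n).G) =
    (xs n : ℝ) * Real.log 2 + (ys n : ℝ) * Real.log 3 := by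
  rw [stc_eq, (counts_flower n).1]
  push_cast
  rw [Real.log_mul (by positivity) (by positivity), Real.log_pow, Real.log_pow]

end STAux

/-- The asymptotic growth constant of the number of spanning trees of the `(1,3)`-flower:
`lim_{n → ∞} (ln τ(F_n)) / |V(F_n)| = (1 / 6) * (4 * ln 2 + ln 3)`. -/
theorem flower13_spanning_tree_entropy :
    Filter.Tendsto
      (fun n : ℕ =>
        Real.log (spanningTreeCount (flower13 n).G) / (Fintype.card (flower13 n).V : ℝ))
      Filter.atTop (nhds ((1 / 6) * (4 * Real.log 2 + Real.log 3))) := by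
  have key := (STAux.tendsto_ratio_x.mul_const (Real.log 2)).add
    (STAux.tendsto_ratio_y.mul_const (Real.log 3))
  have hconst : (2 : ℝ) / 3 * Real.log 2 + 1 / 6 * Real.log 3 =
      1 / 6 * (4 * Real.log 2 + Real.log 3) := by ring
  rw [hconst] at key
  refine Filter.Tendsto.congr (fun n => ?_) key
  rw [STAux.log_count n]
  ring

end
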